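/- Let κ be a binary kernel on a set U with U_ref = {x ∈ U | κ(x,x) = 1}, and let Q = {Q₁,…,Q_d} be the set of equivalence classes of the induced relation ∼_κ on U_ref. For a finite subset X ⊆ U define φ⋆(X) ∈ ℝ^d by φ⋆(X)_i = |Qᵢ ∩ X|. Then for all finite subsets X, Y ⊆ U, Σ_{i=1}^{d} φ⋆(X)_i · φ⋆(Y)_i = Σ_{x ∈ X} Σ_{y ∈ Y} κ(x,y); that is, φ⋆ is a feature map of the cross product (R-convolution) kernel with binary base kernel κ. -/
import Mathlib


/-- A positive semidefinite kernel on a set `U`: a symmetric real-valued function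
all of whose finite Gram matrices are positive semidefinite. -/
def IsPSDKernel {U : Type*} (k : U → U → ℝ) : Prop :=
  (∀ x y, k x y = k y x) ∧
  ∀ (n : ℕ) (x : Fin n → U) (c : Fin n → ℝ),
    0 ≤ ∑ i, ∑ j, c i * c j * k (x i) (x j)

/-- The equivalence classes of the relation `∼_κ` induced by a binary kernel `κ`
on `U_ref = {x | κ x x = 1}`: the sets `[x]_κ = {y | κ x y = 1}` for `x ∈ U_ref`. -/
def KernelClasses {U : Type*} (κ : U → U → ℝ) : Type _ :=
  {S : Set U // ∃ x, κ x x = 1 ∧ S = {y | κ x y = 1}}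

/-- For a binary kernel `κ` on `U` with finitely many equivalence classes
`Q₁,…,Q_d` of `∼_κ` on `U_ref`, the map `φ⋆(X)ᵢ = |Qᵢ ∩ X|` is a feature map of
the cross product (R-convolution) kernel with base kernel `κ`:
`Σᵢ φ⋆(X)ᵢ · φ⋆(Y)ᵢ = Σ_{x ∈ X} Σ_{y ∈ Y} κ(x,y)` for all finite `X, Y ⊆ U`. -/
theorem convolution_kernel_binary_feature_map {U : Type*} (κ : U → U → ℝ)
    (hpsd : IsPSDKernel κ) (hbin : ∀ x y, κ x y = 0 ∨ κ x y = 1)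
    [Fintype (KernelClasses κ)] (X Y : Finset U) :
    ∑ S : KernelClasses κ,
        (Set.ncard (S.val ∩ ↑X) : ℝ) * (Set.ncard (S.val ∩ ↑Y) : ℝ) =
      ∑ x ∈ X, ∑ y ∈ Y, κ x y := by
  classical
  obtain ⟨hsymm, hpos⟩ := hpsd
  -- κ x y = 1 → κ x x = 1
  have hdiag : ∀ x y, κ x y = 1 → κ x x = 1 := by
    intro x y hxy
    rcases hbin x x with h | h
    · exfalso
      have h2 := hpos 2 ![x, y] ![-(1 + κ y y), 1]
      simp only [Fin.sum_univ_two, Matrix.cons_val_zero, Matrix.cons_val_one,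
        Matrix.head_cons] at h2
      rw [h, hxy, hsymm y x, hxy] at h2
      rcases hbin y y with hy | hy <;> rw [hy] at h2 <;> nlinarith
    · exact h
  -- transitivity: κ a x = 1, κ a z = 1 → κ x z = 1
  have htrans : ∀ a x z, κ a x = 1 → κ a z = 1 → κ x z = 1 := by
    intro a x z hax haz
    rcases hbin x z with h | h
    · exfalso
      have haa := hdiag a x hax
      have hxx := hdiag x a (by rw [hsymm x a]; exact hax)
      have hzz := hdiag z a (by rw [hsymm z a]; exact haz)
      have h3 := hpos 3 ![a, x, z] ![-1, 1, 1]
      simp only [Fin.sum_univ_three, Matrix.cons_val_zero, Matrix.cons_val_one,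
        Matrix.head_cons, Matrix.cons_val_two, Matrix.tail_cons] at h3
      rw [haa, hxx, hzz, hax, haz, h, hsymm x a, hax, hsymm z a, haz,
        hsymm z x, h] at h3
      nlinarith
    · exact h
  -- key pointwise identity
  have hkey : ∀ x y, κ x y =
      ∑ S : KernelClasses κ,
        (if x ∈ S.val then (1 : ℝ) else 0) * (if y ∈ S.val then (1 : ℝ) else 0) := by
    intro x y
    rcases hbin x y with h | h
    · rw [h]
      symm
      apply Finset.sum_eq_zero
      intro S _
      rcases S with ⟨S, a, haa, rfl⟩
      by_cases hx : x ∈ {y | κ a y = 1}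
      · by_cases hy : y ∈ {z | κ a z = 1}
        · exact absurd (htrans a x y hx hy) (by rw [h]; norm_num)
        · simp [hy]
      · simp [hx]
    · have hxx := hdiag x y h
      set S₀ : KernelClasses κ := ⟨{z | κ x z = 1}, x, hxx, rfl⟩ with hS₀
      rw [h]
      symm
      rw [Finset.sum_eq_single S₀]
      · have hx : x ∈ S₀.val := hxx
        have hy : y ∈ S₀.val := h
        simp [hx, hy]
      · intro S _ hS
        rcases hmem : S with ⟨Sv, a, haa, rfl⟩
        by_cases hx : x ∈ ({z | κ a z = 1} : Set U)
        · by_cases hy : y ∈ ({z | κ a z = 1} : Set U)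
          · exfalso
            apply hS
            rw [hmem]
            apply Subtype.ext
            ext z
            simp only [Set.mem_setOf_eq]
            constructor
            · intro hz; exact htrans a x z hx hz
            · intro hz
              have hxa : κ x a = 1 := by rw [hsymm x a]; exact hx
              exact htrans x a z hxa hz
          · simp [hy]
        · simp [hx]
      · intro hn; exact absurd (Finset.mem_univ S₀) hn
  -- rewrite ncard as a sum of indicators
  have hcard : ∀ (S : KernelClasses κ) (Z : Finset U),
      (Set.ncard (S.val ∩ ↑Z) : ℝ) = ∑ z ∈ Z, (if z ∈ S.val then (1 : ℝ) else 0) := by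
    intro S Z
    have : S.val ∩ ↑Z = ↑(Z.filter (· ∈ S.val)) := by
      ext z; simp [and_comm]
    rw [this, Set.ncard_coe_finset, Finset.card_filter]
    push_cast
    simp
  calc ∑ S : KernelClasses κ,
        (Set.ncard (S.val ∩ ↑X) : ℝ) * (Set.ncard (S.val ∩ ↑Y) : ℝ)
      = ∑ S : KernelClasses κ, ∑ x ∈ X, ∑ y ∈ Y,
          (if x ∈ S.val then (1 : ℝ) else 0) * (if y ∈ S.val then (1 : ℝ) else 0) := by
        refine Finset.sum_congr rfl fun S _ => ?_
        rw [hcard S X, hcard S Y, Finset.sum_mul_sum]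
    _ = ∑ x ∈ X, ∑ y ∈ Y, ∑ S : KernelClasses κ,
          (if x ∈ S.val then (1 : ℝ) else 0) * (if y ∈ S.val then (1 : ℝ) else 0) := by
        rw [Finset.sum_comm]
        exact Finset.sum_congr rfl fun x _ => Finset.sum_comm
    _ = ∑ x ∈ X, ∑ y ∈ Y, κ x y := by
        exact Finset.sum_congr rfl fun x _ => Finset.sum_congr rfl fun y _ =>
          (hkey x y).symm
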